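/- arXiv:1307.7816 — 4 statements merged into one kernel-verified Lean document; each statement's English description precedes it below -/
import Mathlib

section
/- The odd divided difference operator ∂_i, defined on generators by ∂_i(x_j) = 1 if j ∈ {i, i+1} and 0 otherwise, together with the twisted Leibniz rule ∂_i(fg) = ∂_i(f)g + (-1)^{|f|} s_i(f) ∂_i(g) for ℤ-homogeneous f (with |x_j| = 2), gives a well-defined k-linear endomorphism of the skew polynomial ring SPol_n. -/
/-! STATEMENT 4: well-definedness of the odd divided difference operator. -/

noncomputable section

/-- The defining relations of the skew polynomial ring: `x_i x_j = -x_j x_i` for `i ≠ j`. -/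
inductive SkewRel (k : Type*) [CommRing k] (n : ℕ) :
    FreeAlgebra k (Fin n) → FreeAlgebra k (Fin n) → Prop
  | skew (i j : Fin n) (h : i ≠ j) :
      SkewRel k n (FreeAlgebra.ι k i * FreeAlgebra.ι k j)
        (-(FreeAlgebra.ι k j * FreeAlgebra.ι k i))

/-- The ring of skew polynomials `SPol_n = k⟨x_1,…,x_n⟩/(x_i x_j + x_j x_i, i ≠ j)`. -/
abbrev SPol (k : Type*) [CommRing k] (n : ℕ) : Type _ := RingQuot (SkewRel k n)

/-- The generators `x_i` of the skew polynomial ring. -/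
def SPol.X (k : Type*) [CommRing k] (n : ℕ) (i : Fin n) : SPol k n :=
  RingQuot.mkAlgHom k (SkewRel k n) (FreeAlgebra.ι k i)

/-- The monomial `x_{l₁} ⋯ x_{l_r}` associated to a word `l` in the generators. -/
def SPol.mon (k : Type*) [CommRing k] (n : ℕ) (l : List (Fin n)) : SPol k n :=
  (l.map (SPol.X k n)).prod

/-- The homogeneous component of `SPol_n` spanned by the monomials in `m` generators;
these are the homogeneous elements of `ℤ`-degree `2m` for the grading with `|x_i| = 2`
(equivalently, of parity `m`). -/
def SPol.homog (k : Type*) [CommRing k] (n : ℕ) (m : ℕ) : Submodule k (SPol k n) :=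
  Submodule.span k {f | ∃ l : List (Fin n), l.length = m ∧ f = SPol.mon k n l}

/-- `D` is the odd divided difference operator for the simple transposition exchanging the
(adjacent) indices `i` and `i'`, where `s` is the algebra endomorphism permuting the
variables accordingly: `D` takes the value `1` on `x_i` and `x_{i'}` and `0` on the other
generators, and satisfies the twisted Leibniz rule
`∂(fg) = ∂(f)g + (-1)^m s(f) ∂(g)` for `f` homogeneous of `ℤ`-degree `2m`. -/
def IsOddDD (k : Type*) [CommRing k] (n : ℕ) (i i' : Fin n)
    (s : SPol k n →ₐ[k] SPol k n) (D : SPol k n →ₗ[k] SPol k n) : Prop :=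
  (∀ j : Fin n, s (SPol.X k n j) = SPol.X k n (Equiv.swap i i' j)) ∧
  (∀ j : Fin n, D (SPol.X k n j) = if j = i ∨ j = i' then 1 else 0) ∧
  (∀ (m : ℕ) (f g : SPol k n), f ∈ SPol.homog k n m →
      D (f * g) = D f * g + ((-1 : ℤ) ^ m) • (s f * D g))

namespace OddDDAux

variable (k : Type*) [CommRing k] (n : ℕ) (i i' : Fin n)

lemma X_swap (a b : Fin n) (h : a ≠ b) :
    SPol.X k n a * SPol.X k n b = -(SPol.X k n b * SPol.X k n a) := by
  have := RingQuot.mkAlgHom_rel k (SkewRel.skew (k := k) (n := n) a b h)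
  simp only [map_mul, map_neg] at this
  exact this

/-- value of D on generators -/
def d (j : Fin n) : SPol k n := if j = i ∨ j = i' then 1 else 0

/-- the sign-twisted permutation endomorphism on generators -/
def σgen (j : Fin n) : SPol k n := -(SPol.X k n (Equiv.swap i i' j))

lemma sig_rel : ∀ ⦃x y⦄, SkewRel k n x y →
    (FreeAlgebra.lift k (σgen k n i i')) x = (FreeAlgebra.lift k (σgen k n i i')) y := by
  rintro _ _ ⟨a, b, h⟩
  simp only [map_mul, map_neg, FreeAlgebra.lift_ι_apply, σgen]
  rw [show ∀ x y : SPol k n, (-x) * (-y) = x * y from fun x y => neg_mul_neg x y,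
    show ∀ x y : SPol k n, (-x) * (-y) = x * y from fun x y => neg_mul_neg x y]
  exact X_swap k n _ _ ((Equiv.swap i i').injective.ne h)

def σ : SPol k n →ₐ[k] SPol k n :=
  RingQuot.liftAlgHom k ⟨FreeAlgebra.lift k (σgen k n i i'), sig_rel k n i i'⟩

def s_rel : ∀ ⦃x y⦄, SkewRel k n x y →
    (FreeAlgebra.lift k (fun j => SPol.X k n (Equiv.swap i i' j))) x =
    (FreeAlgebra.lift k (fun j => SPol.X k n (Equiv.swap i i' j))) y := by
  rintro _ _ ⟨a, b, h⟩
  simp only [map_mul, map_neg, FreeAlgebra.lift_ι_apply]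
  exact X_swap k n _ _ ((Equiv.swap i i').injective.ne h)

def sEnd : SPol k n →ₐ[k] SPol k n :=
  RingQuot.liftAlgHom k ⟨FreeAlgebra.lift k (fun j => SPol.X k n (Equiv.swap i i' j)),
    s_rel k n i i'⟩

lemma sEnd_X (j : Fin n) : sEnd k n i i' (SPol.X k n j) = SPol.X k n (Equiv.swap i i' j) := by
  simp [sEnd, SPol.X, RingQuot.liftAlgHom_mkAlgHom_apply]

lemma σ_X (j : Fin n) : σ k n i i' (SPol.X k n j) = -(SPol.X k n (Equiv.swap i i' j)) := by
  simp [σ, SPol.X, RingQuot.liftAlgHom_mkAlgHom_apply, σgen]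

/-- the matrix attached to a generator -/
def M (j : Fin n) : Matrix (Fin 2) (Fin 2) (SPol k n) :=
  !![σgen k n i i' j, d k n i i' j; 0, SPol.X k n j]

variable (hii' : i ≠ i')

lemma M_rel : ∀ ⦃x y⦄, SkewRel k n x y →
    (FreeAlgebra.lift k (M k n i i')) x = (FreeAlgebra.lift k (M k n i i')) y := by
  rintro _ _ ⟨a, b, h⟩
  simp only [map_mul, map_neg, FreeAlgebra.lift_ι_apply, M, Matrix.mul_fin_two]
  have sab : Equiv.swap i i' a ≠ Equiv.swap i i' b := (Equiv.swap i i').injective.ne h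
  have e00 : σgen k n i i' a * σgen k n i i' b + d k n i i' a * 0 =
      -(σgen k n i i' b * σgen k n i i' a + d k n i i' b * 0) := by
    simp only [mul_zero, add_zero, σgen]
    rw [show ∀ x y : SPol k n, (-x) * (-y) = x * y from fun x y => neg_mul_neg x y,
      show ∀ x y : SPol k n, (-x) * (-y) = x * y from fun x y => neg_mul_neg x y]
    exact X_swap k n _ _ sab
  have e11 : 0 * d k n i i' b + SPol.X k n a * SPol.X k n b =
      -(0 * d k n i i' a + SPol.X k n b * SPol.X k n a) := by
    simpa using X_swap k n a b h
  have e01 : σgen k n i i' a * d k n i i' b + d k n i i' a * SPol.X k n b =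
      -(σgen k n i i' b * d k n i i' a + d k n i i' b * SPol.X k n a) := by
    by_cases ha : a = i ∨ a = i' <;> by_cases hb : b = i ∨ b = i'
    · have hsa : Equiv.swap i i' a = b := by
        rcases ha with ha | ha <;> rcases hb with hb | hb <;> subst ha <;> subst hb <;>
          simp_all [Equiv.swap_apply_left, Equiv.swap_apply_right]
      have hsb : Equiv.swap i i' b = a := by
        rcases ha with ha | ha <;> rcases hb with hb | hb <;> subst hb <;> subst ha <;>
          simp_all [Equiv.swap_apply_left, Equiv.swap_apply_right]
      simp only [d, if_pos ha, if_pos hb, σgen, hsa, hsb, mul_one, one_mul]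
      abel
    · have hsb : Equiv.swap i i' b = b := by
        push_neg at hb; exact Equiv.swap_apply_of_ne_of_ne hb.1 hb.2
      simp only [d, if_pos ha, if_neg hb, σgen, hsb, mul_one, one_mul, mul_zero, zero_mul,
        add_zero, zero_add, neg_neg]
    · have hsa : Equiv.swap i i' a = a := by
        push_neg at ha; exact Equiv.swap_apply_of_ne_of_ne ha.1 ha.2
      simp only [d, if_neg ha, if_pos hb, σgen, hsa, mul_one, one_mul, mul_zero, zero_mul,
        add_zero, zero_add]
    · simp [d, if_neg ha, if_neg hb]
  ext p q
  fin_cases p <;> fin_cases q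
  · simpa using e00
  · simpa using e01
  · simp
  · simpa using e11

def Ψ : SPol k n →ₐ[k] Matrix (Fin 2) (Fin 2) (SPol k n) :=
  RingQuot.liftAlgHom k ⟨FreeAlgebra.lift k (M k n i i'), M_rel k n i i'⟩

lemma Ψ_X (j : Fin n) : Ψ k n i i' (SPol.X k n j) = M k n i i' j := by
  simp [Ψ, SPol.X, RingQuot.liftAlgHom_mkAlgHom_apply]

lemma Ψ_shape (f : SPol k n) :
    Ψ k n i i' f 1 0 = 0 ∧ Ψ k n i i' f 1 1 = f ∧ Ψ k n i i' f 0 0 = σ k n i i' f := by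
  obtain ⟨a, rfl⟩ := RingQuot.mkAlgHom_surjective k (SkewRel k n) f
  induction a with
  | grade0 r =>
    rw [AlgHom.commutes, AlgHom.commutes, AlgHom.commutes]
    simp [Matrix.algebraMap_matrix_apply]
  | grade1 x =>
    rw [show (RingQuot.mkAlgHom k (SkewRel k n)) (FreeAlgebra.ι k x) = SPol.X k n x from rfl,
      Ψ_X, σ_X]
    simp [M, σgen]
  | mul a b ha hb =>
    obtain ⟨ha0, ha1, ha2⟩ := ha
    obtain ⟨hb0, hb1, hb2⟩ := hb
    rw [map_mul, map_mul, map_mul]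
    simp only [Matrix.mul_apply, Fin.sum_univ_two, ha0, ha1, ha2, hb0, hb1, hb2]
    refine ⟨by simp, by simp, by simp⟩
  | add a b ha hb =>
    obtain ⟨ha0, ha1, ha2⟩ := ha
    obtain ⟨hb0, hb1, hb2⟩ := hb
    rw [map_add, map_add, map_add]
    simp [Matrix.add_apply, ha0, ha1, ha2, hb0, hb1, hb2]

def D : SPol k n →ₗ[k] SPol k n where
  toFun f := Ψ k n i i' f 0 1
  map_add' f g := by simp only [map_add, Matrix.add_apply]
  map_smul' c f := by simp only [map_smul, Matrix.smul_apply, RingHom.id_apply]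

lemma D_X (j : Fin n) : D k n i i' (SPol.X k n j) = d k n i i' j := by
  simp [D, Ψ_X, M]

lemma D_mul (f g : SPol k n) :
    D k n i i' (f * g) = D k n i i' f * g + σ k n i i' f * D k n i i' g := by
  have hf := Ψ_shape k n i i' f
  have hg := Ψ_shape k n i i' g
  simp only [D, LinearMap.coe_mk, AddHom.coe_mk, map_mul, Matrix.mul_apply, Fin.sum_univ_two,
    hf.1, hf.2.1, hf.2.2, hg.1, hg.2.1, hg.2.2]
  exact add_comm _ _

end OddDDAux

namespace OddDDAux
variable (k : Type*) [CommRing k] (n : ℕ) (i i' : Fin n)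

lemma neg_mul_smul (x y : SPol k n) (z : ℤ) : (-x) * (z • y) = (z * -1) • (x * y) := by
  have h1 : (-x) * (z • y) = -(x * (z • y)) := neg_mul x (z • y)
  have h2 : x * (z • y) = z • (x * y) := mul_smul_comm z x y
  have h3 : (z * -1) • (x * y) = -(z • (x * y)) := by rw [mul_neg_one, neg_smul]
  rw [h1, h2, h3]

lemma σ_mon (l : List (Fin n)) :
    σ k n i i' (SPol.mon k n l) = ((-1 : ℤ) ^ l.length) • sEnd k n i i' (SPol.mon k n l) := by
  induction l with
  | nil => simp [SPol.mon]
  | cons j l ih =>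
    have hmon : SPol.mon k n (j :: l) = SPol.X k n j * SPol.mon k n l := by
      simp [SPol.mon]
    rw [hmon, map_mul, map_mul, σ_X, sEnd_X, ih, List.length_cons, pow_succ]
    exact neg_mul_smul k n _ _ _

lemma σ_homog (m : ℕ) (f : SPol k n) (hf : f ∈ SPol.homog k n m) :
    σ k n i i' f = ((-1 : ℤ) ^ m) • sEnd k n i i' f := by
  induction hf using Submodule.span_induction with
  | mem x hx => obtain ⟨l, hl, rfl⟩ := hx; rw [σ_mon, hl]
  | zero => simp
  | add x y _ _ hx hy => rw [map_add, map_add, hx, hy]; exact (smul_add _ _ _).symm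
  | smul c x _ hx => rw [map_smul, map_smul, hx, smul_comm]

end OddDDAux

/-- the odd divided difference operator `∂_i`, defined on generators by
`∂_i(x_j) = 1` if `j ∈ {i, i+1}` and `0` otherwise, together with the twisted Leibniz
rule, gives a well-defined `k`-linear endomorphism of `SPol_n` (here `s` is the algebra
endomorphism of `SPol_n` induced by the simple transposition `s_i`). -/
theorem odd_divided_difference_well_defined (k : Type*) [CommRing k] (n : ℕ)
    (i i' : Fin n) (hii' : (i' : ℕ) = (i : ℕ) + 1) :
    ∃ (s : SPol k n →ₐ[k] SPol k n) (D : SPol k n →ₗ[k] SPol k n),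
      IsOddDD k n i i' s D := by
  refine ⟨OddDDAux.sEnd k n i i', OddDDAux.D k n i i',
    OddDDAux.sEnd_X k n i i', fun j => ?_, fun m f g hf => ?_⟩
  · rw [OddDDAux.D_X]; rfl
  · rw [OddDDAux.D_mul, OddDDAux.σ_homog k n i i' m f hf]
    have h : (((-1 : ℤ) ^ m) • (OddDDAux.sEnd k n i i' f)) * OddDDAux.D k n i i' g =
        ((-1 : ℤ) ^ m) • (OddDDAux.sEnd k n i i' f * OddDDAux.D k n i i' g) :=
      smul_mul_assoc _ _ _
    rw [h]

end
end

section
/- Each odd divided difference operator satisfies ∂_i² = 0 as an operator on the skew polynomial ring SPol_n. -/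
/-! STATEMENT 5: each odd divided difference operator squares to zero. -/

noncomputable section

/-- `∂_i² = 0` as an operator on the skew polynomial ring `SPol_n`. -/
theorem odd_dd_sq_zero (k : Type*) [CommRing k] (n : ℕ) (i i' : Fin n)
    (hii' : (i' : ℕ) = (i : ℕ) + 1)
    (s : SPol k n →ₐ[k] SPol k n) (D : SPol k n →ₗ[k] SPol k n)
    (hD : IsOddDD k n i i' s D) :
    D ∘ₗ D = 0 := by
  obtain ⟨hs, hX, hL⟩ := hD
  set σ := Equiv.swap i i' with hσdef
  have hmon_nil : SPol.mon k n ([] : List (Fin n)) = 1 := by simp [SPol.mon]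
  have hmon_cons : ∀ (j : Fin n) (t : List (Fin n)),
      SPol.mon k n (j :: t) = SPol.X k n j * SPol.mon k n t := by
    intro j t; simp [SPol.mon]
  have hmem : ∀ l : List (Fin n), SPol.mon k n l ∈ SPol.homog k n l.length := fun l =>
    Submodule.subset_span ⟨l, rfl, rfl⟩
  have h1 : (1 : SPol k n) ∈ SPol.homog k n 0 := by
    simpa [hmon_nil] using hmem []
  have hX1 : ∀ j : Fin n, SPol.X k n j ∈ SPol.homog k n 1 := by
    intro j
    have := hmem [j]
    simpa [SPol.mon] using this
  have hD1 : D 1 = 0 := by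
    have h := hL 0 1 1 h1
    simp only [one_mul, pow_zero, one_smul, map_one] at h
    rw [mul_one] at h
    exact (left_eq_add.mp h)
  -- value of D on X (σ j) equals value on X j
  have hεσ : ∀ j : Fin n, D (SPol.X k n (σ j)) = D (SPol.X k n j) := by
    intro j
    rw [hX, hX]
    have hiff : (σ j = i ∨ σ j = i') ↔ (j = i ∨ j = i') := by
      constructor
      · rintro (h | h)
        · right
          have := congrArg σ h
          simpa [hσdef, Equiv.swap_apply_self, Equiv.swap_apply_left] using this
        · left
          have := congrArg σ h
          simpa [hσdef, Equiv.swap_apply_self, Equiv.swap_apply_right] using this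
      · rintro (h | h)
        · subst h; right; simp [hσdef]
        · subst h; left; simp [hσdef]
    simp [hiff]
  have key : ∀ l : List (Fin n), D (D (SPol.mon k n l)) = 0 := by
    intro l
    induction l with
    | nil => simp [hmon_nil, hD1]
    | cons j t ih =>
      have e1 : D (SPol.mon k n (j :: t))
          = D (SPol.X k n j) * SPol.mon k n t
            - SPol.X k n (σ j) * D (SPol.mon k n t) := by
        rw [hmon_cons, hL 1 _ _ (hX1 j), hs j]
        simp [pow_one, sub_eq_add_neg]
      have e2 : D (SPol.X k n (σ j) * D (SPol.mon k n t))
          = D (SPol.X k n (σ j)) * D (SPol.mon k n t) := by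
        rw [hL 1 _ _ (hX1 (σ j)), hs (σ j)]
        have : σ (σ j) = j := Equiv.swap_apply_self i i' j
        rw [this, ih]
        simp
      rw [e1, map_sub, e2, hεσ]
      by_cases h : j = i ∨ j = i'
      · rw [hX]
        simp only [h, if_true, one_mul]
        abel_nf
      · rw [hX]
        simp [h]
  -- the monomials span everything
  have hmulmon : ∀ a b : List (Fin n),
      SPol.mon k n a * SPol.mon k n b = SPol.mon k n (a ++ b) := by
    intro a b; simp [SPol.mon]
  set T : Submodule k (SPol k n) :=
    Submodule.span k {f : SPol k n | ∃ l, f = SPol.mon k n l} with hT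
  have hTone : (1 : SPol k n) ∈ T := Submodule.subset_span ⟨[], hmon_nil.symm⟩
  have hTmul : ∀ x y : SPol k n, x ∈ T → y ∈ T → x * y ∈ T := by
    intro x y hx hy
    have : T * T ≤ T := by
      rw [hT, Submodule.span_mul_span]
      apply Submodule.span_le.2
      rintro z ⟨a, ⟨la, rfl⟩, b, ⟨lb, rfl⟩, rfl⟩
      exact Submodule.subset_span ⟨la ++ lb, (hmulmon la lb)⟩
    exact this (Submodule.mul_mem_mul hx hy)
  have hTtop : T = ⊤ := by
    rw [eq_top_iff]
    intro x hx0
    obtain ⟨y, rfl⟩ := RingQuot.mkAlgHom_surjective k (SkewRel k n) x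
    clear hx0
    induction y using FreeAlgebra.induction with
    | grade0 r =>
      rw [AlgHom.commutes]
      simpa [Algebra.algebraMap_eq_smul_one] using T.smul_mem r hTone
    | grade1 a =>
      exact Submodule.subset_span ⟨[a], by simp [SPol.mon, SPol.X]⟩
    | mul a b ha hb =>
      rw [map_mul]; exact hTmul _ _ ha hb
    | add a b ha hb =>
      rw [map_add]; exact T.add_mem ha hb
  ext x
  simp only [LinearMap.comp_apply, LinearMap.zero_apply]
  have hx : x ∈ T := hTtop ▸ Submodule.mem_top
  induction hx using Submodule.span_induction with
  | mem f hf => obtain ⟨l, rfl⟩ := hf; exact key l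
  | zero => simp
  | add a b _ _ ha hb => simp [ha, hb]
  | smul c a _ ha => simp [ha]
end
end

section
/- The odd divided difference operators satisfy the braid relation ∂_i ∂_{i+1} ∂_i = ∂_{i+1} ∂_i ∂_{i+1} as operators on SPol_n. -/
/-! STATEMENT 6: odd divided difference operators satisfy the braid relation. -/

noncomputable section

/-- `∂_i ∂_{i+1} ∂_i = ∂_{i+1} ∂_i ∂_{i+1}` as operators on `SPol_n`. -/
theorem odd_dd_braid (k : Type*) [CommRing k] (n : ℕ) (i i' i'' : Fin n)
    (h1 : (i' : ℕ) = (i : ℕ) + 1) (h2 : (i'' : ℕ) = (i' : ℕ) + 1)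
    (s s' : SPol k n →ₐ[k] SPol k n) (D D' : SPol k n →ₗ[k] SPol k n)
    (hD : IsOddDD k n i i' s D) (hD' : IsOddDD k n i' i'' s' D') :
    D ∘ₗ D' ∘ₗ D = D' ∘ₗ D ∘ₗ D' := by
  obtain ⟨hs, hX, hL⟩ := hD
  obtain ⟨hs', hX', hL'⟩ := hD'
  -- distinctness of the three indices
  have hii' : i ≠ i' := by intro h; rw [h] at h1; omega
  have hi'i'' : i' ≠ i'' := by intro h; rw [h] at h2; omega
  have hii'' : i ≠ i'' := by intro h; rw [h] at h1; omega
  have hi'i : i' ≠ i := hii'.symm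
  have hi''i' : i'' ≠ i' := hi'i''.symm
  have hi''i : i'' ≠ i := hii''.symm
  -- swap values
  have hσi : Equiv.swap i i' i = i' := Equiv.swap_apply_left i i'
  have hσi' : Equiv.swap i i' i' = i := Equiv.swap_apply_right i i'
  have hσi'' : Equiv.swap i i' i'' = i'' := Equiv.swap_apply_of_ne_of_ne hi''i hi''i'
  have hτi : Equiv.swap i' i'' i = i := Equiv.swap_apply_of_ne_of_ne hii' hii''
  have hτi' : Equiv.swap i' i'' i' = i'' := Equiv.swap_apply_left i' i''
  have hτi'' : Equiv.swap i' i'' i'' = i' := Equiv.swap_apply_right i' i''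
  -- basic homogeneity facts
  have hXm : ∀ j : Fin n, SPol.X k n j ∈ SPol.homog k n 1 := fun j =>
    Submodule.subset_span ⟨[j], rfl, by simp [SPol.mon]⟩
  have h1m : (1 : SPol k n) ∈ SPol.homog k n 0 :=
    Submodule.subset_span ⟨[], rfl, by simp [SPol.mon]⟩
  -- D and D' kill 1
  have hD1 : D 1 = 0 := by
    have h := hL 0 1 1 h1m
    simpa using h
  have hD'1 : D' 1 = 0 := by
    have h := hL' 0 1 1 h1m
    simpa using h
  -- twisted Leibniz on a generator
  have hDm : ∀ (j : Fin n) (g : SPol k n),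
      D (SPol.X k n j * g)
        = (if j = i ∨ j = i' then g else 0)
          - SPol.X k n (Equiv.swap i i' j) * D g := by
    intro j g
    have h := hL 1 (SPol.X k n j) g (hXm j)
    rw [hX j, hs j] at h
    simpa [ite_mul, sub_eq_add_neg] using h
  have hD'm : ∀ (j : Fin n) (g : SPol k n),
      D' (SPol.X k n j * g)
        = (if j = i' ∨ j = i'' then g else 0)
          - SPol.X k n (Equiv.swap i' i'' j) * D' g := by
    intro j g
    have h := hL' 1 (SPol.X k n j) g (hXm j)
    rw [hX' j, hs' j] at h
    simpa [ite_mul, sub_eq_add_neg] using h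
  -- the key induction on monomials
  have key : ∀ l : List (Fin n),
      D (D (SPol.mon k n l)) = 0 ∧ D' (D' (SPol.mon k n l)) = 0 ∧
      D (D' (D (SPol.mon k n l))) = D' (D (D' (SPol.mon k n l))) := by
    intro l
    induction l with
    | nil => simp [SPol.mon, hD1, hD'1]
    | cons j l ih =>
      obtain ⟨ih1, ih2, ih3⟩ := ih
      have hmc : SPol.mon k n (j :: l) = SPol.X k n j * SPol.mon k n l := by
        simp [SPol.mon]
      set g := SPol.mon k n l with hg
      rw [hmc]
      rcases eq_or_ne j i with rfl | hji
      · refine ⟨?_, ?_, ?_⟩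
        · simp [hDm, hσi, hσi', hii', hi'i, map_sub, ih1]
        · simp [hD'm, hτi, hii', hii'', map_sub, ih2]
        · simp [hDm, hD'm, hσi, hσi', hσi'', hτi, hτi', hτi'',
            hii', hi'i, hii'', hi''i, hi'i'', hi''i', map_sub, ih1, ih2, ih3]
      · rcases eq_or_ne j i' with rfl | hji'
        · refine ⟨?_, ?_, ?_⟩
          · simp [hDm, hσi, hσi', hi'i, hii', map_sub, ih1]
          · simp [hD'm, hτi', hτi'', hi'i'', hi''i', map_sub, ih2]
          · simp [hDm, hD'm, hσi, hσi', hσi'', hτi, hτi', hτi'',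
              hii', hi'i, hii'', hi''i, hi'i'', hi''i', map_sub, ih1, ih2, ih3]
            abel
        · rcases eq_or_ne j i'' with rfl | hji''
          · refine ⟨?_, ?_, ?_⟩
            · simp [hDm, hσi'', hi''i, hi''i', map_sub, ih1]
            · simp [hD'm, hτi', hτi'', hi''i', hi'i'', map_sub, ih2]
            · simp [hDm, hD'm, hσi, hσi', hσi'', hτi, hτi', hτi'',
                hii', hi'i, hii'', hi''i, hi'i'', hi''i', map_sub, ih1, ih2, ih3]
          · have hσj : Equiv.swap i i' j = j :=
              Equiv.swap_apply_of_ne_of_ne hji hji'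
            have hτj : Equiv.swap i' i'' j = j :=
              Equiv.swap_apply_of_ne_of_ne hji' hji''
            refine ⟨?_, ?_, ?_⟩
            · simp [hDm, hσj, hji, hji', map_sub, ih1]
            · simp [hD'm, hτj, hji', hji'', map_sub, ih2]
            · simp [hDm, hD'm, hσj, hτj, hji, hji', hji'', map_sub, ih1, ih2, ih3]
  -- monomials span
  have hmonmul : ∀ l l' : List (Fin n),
      SPol.mon k n l * SPol.mon k n l' = SPol.mon k n (l ++ l') := by
    intro l l'; simp [SPol.mon]
  have hmem : ∀ z : SPol k n,
      z ∈ Submodule.span k {f : SPol k n | ∃ l : List (Fin n), f = SPol.mon k n l} := by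
    have hmul : ∀ x y : SPol k n,
        x ∈ Submodule.span k {f : SPol k n | ∃ l : List (Fin n), f = SPol.mon k n l} →
        y ∈ Submodule.span k {f : SPol k n | ∃ l : List (Fin n), f = SPol.mon k n l} →
        x * y ∈ Submodule.span k {f : SPol k n | ∃ l : List (Fin n), f = SPol.mon k n l} := by
      intro x y hx hy
      induction hx using Submodule.span_induction with
      | mem f hf =>
        induction hy using Submodule.span_induction with
        | mem g hg =>
          obtain ⟨l, rfl⟩ := hf
          obtain ⟨l', rfl⟩ := hg
          exact Submodule.subset_span ⟨l ++ l', hmonmul l l'⟩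
        | zero => simp
        | add a b _ _ ha hb => rw [mul_add]; exact add_mem ha hb
        | smul c a _ ha => rw [mul_smul_comm]; exact Submodule.smul_mem _ c ha
      | zero => simp
      | add a b _ _ ha hb => rw [add_mul]; exact add_mem ha hb
      | smul c a _ ha => rw [smul_mul_assoc]; exact Submodule.smul_mem _ c ha
    intro z
    obtain ⟨w, rfl⟩ := RingQuot.mkAlgHom_surjective k (SkewRel k n) z
    induction w using FreeAlgebra.induction with
    | grade0 r =>
      rw [AlgHom.commutes, Algebra.algebraMap_eq_smul_one]
      exact Submodule.smul_mem _ r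
        (Submodule.subset_span ⟨[], by simp [SPol.mon]⟩)
    | grade1 x =>
      exact Submodule.subset_span ⟨[x], by simp [SPol.mon, SPol.X]⟩
    | mul a b ha hb => rw [map_mul]; exact hmul _ _ ha hb
    | add a b ha hb => rw [map_add]; exact add_mem ha hb
  apply LinearMap.ext
  intro z
  induction hmem z using Submodule.span_induction with
  | mem f hf =>
    obtain ⟨l, rfl⟩ := hf
    simpa using (key l).2.2
  | zero => simp
  | add a b _ _ ha hb => simp only [LinearMap.comp_apply, map_add] at *; rw [ha, hb]
  | smul c a _ ha => simp only [LinearMap.comp_apply, map_smul] at *; rw [ha]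
end
end

section
/- In the ring SPol_n, for all homogeneous f the identity (x_{i+1} - x_i) f - (-1)^{|f|} s_i(f)(x_{i+1} - x_i) = (x_{i+1}² - x_i²) ∂_i(f) holds; i.e., ∂_i(f) = ((x_{i+1}-x_i)f - (-1)^{|f|} s_i(f)(x_{i+1}-x_i))/(x_{i+1}² - x_i²). -/
/-! STATEMENT 8: closed formula for the odd divided difference operator. -/

noncomputable section

section Aux

variable {k : Type*} [CommRing k] {n : ℕ}

lemma SPol.X_anti (j j' : Fin n) (h : j ≠ j') :
    SPol.X k n j * SPol.X k n j' = -(SPol.X k n j' * SPol.X k n j) := by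
  have := RingQuot.mkAlgHom_rel (S := k) (A := FreeAlgebra k (Fin n)) (SkewRel.skew j j' h)
  simpa [SPol.X, map_mul, map_neg] using this

lemma anti_mul_sq {R : Type*} [Ring R] (a b : R) (h1 : a * b = -(b * a)) :
    a * b ^ 2 = b ^ 2 * a := by
  rw [sq, ← mul_assoc, h1, neg_mul, mul_assoc, h1, mul_neg, neg_neg, ← mul_assoc]

lemma SPol.X_comm_sq (j p : Fin n) :
    SPol.X k n j * SPol.X k n p ^ 2 = SPol.X k n p ^ 2 * SPol.X k n j := by
  by_cases h : j = p
  · subst h; noncomm_ring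
  · exact anti_mul_sq _ _ (SPol.X_anti (k := k) (n := n) j p h)

lemma SPol.mon_nil : SPol.mon k n [] = 1 := rfl

lemma SPol.mon_cons (j : Fin n) (l : List (Fin n)) :
    SPol.mon k n (j :: l) = SPol.X k n j * SPol.mon k n l := by
  simp [SPol.mon]

lemma SPol.one_mem_homog : (1 : SPol k n) ∈ SPol.homog k n 0 :=
  Submodule.subset_span ⟨[], rfl, rfl⟩

lemma SPol.X_mem_homog (j : Fin n) : SPol.X k n j ∈ SPol.homog k n 1 :=
  Submodule.subset_span ⟨[j], rfl, by simp [SPol.mon]⟩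

/-- The key linear-algebra step shared by all three cases of the induction. -/
lemma key_step {R : Type*} [Ring R] (y c a w g sg Dg d : R) (ε : ℤ)
    (IH : y * g - ε • (sg * y) = c * Dg)
    (hK : y * a + w * y = c * d)
    (hcw : w * c = c * w) :
    y * (a * g) + ε • (w * (sg * y)) = c * (d * g - w * Dg) := by
  have h1 : w * (y * g) - ε • (w * (sg * y)) = c * (w * Dg) := by
    calc w * (y * g) - ε • (w * (sg * y)) = w * (y * g - ε • (sg * y)) := by
          rw [mul_sub, mul_smul_comm]
      _ = w * (c * Dg) := by rw [IH]
      _ = c * (w * Dg) := by rw [← mul_assoc, hcw, mul_assoc]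
  have h2 : ε • (w * (sg * y)) = w * (y * g) - c * (w * Dg) := by
    rw [← h1]; abel
  rw [h2, show y * (a * g) + (w * (y * g) - c * (w * Dg))
      = (y * a + w * y) * g - c * (w * Dg) by noncomm_ring, hK]
  noncomm_ring

end Aux

/-- for homogeneous `f` (of `ℤ`-degree `2m`, i.e. a combination of monomials
in `m` generators) one has
`(x_{i+1} - x_i) f - (-1)^m s_i(f)(x_{i+1} - x_i) = (x_{i+1}² - x_i²) ∂_i(f)`. -/
theorem odd_dd_closed_formula (k : Type*) [CommRing k] (n : ℕ) (i i' : Fin n)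
    (hii' : (i' : ℕ) = (i : ℕ) + 1)
    (s : SPol k n →ₐ[k] SPol k n) (D : SPol k n →ₗ[k] SPol k n)
    (hD : IsOddDD k n i i' s D)
    (m : ℕ) (f : SPol k n) (hf : f ∈ SPol.homog k n m) :
    (SPol.X k n i' - SPol.X k n i) * f
        - ((-1 : ℤ) ^ m) • (s f * (SPol.X k n i' - SPol.X k n i))
      = (SPol.X k n i' ^ 2 - SPol.X k n i ^ 2) * D f := by
  obtain ⟨hs, hDX, hLeib⟩ := hD
  have hii : i ≠ i' := by intro h; rw [h] at hii'; omega
  set y := SPol.X k n i' - SPol.X k n i with hy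
  set c := SPol.X k n i' ^ 2 - SPol.X k n i ^ 2 with hc
  have hcomm : ∀ j : Fin n, SPol.X k n j * c = c * SPol.X k n j := fun j => by
    rw [hc, mul_sub, sub_mul, SPol.X_comm_sq, SPol.X_comm_sq]
  have hD1 : D 1 = 0 := by
    have h0 := hLeib 0 1 1 SPol.one_mem_homog
    simp only [mul_one, pow_zero, one_smul, map_one, one_mul] at h0
    exact (left_eq_add.mp h0)
  have hmon : ∀ l : List (Fin n),
      y * SPol.mon k n l - ((-1 : ℤ) ^ l.length) • (s (SPol.mon k n l) * y)
        = c * D (SPol.mon k n l) := by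
    intro l
    induction l with
    | nil => simp [SPol.mon_nil, hD1]
    | cons j l ih =>
      rw [SPol.mon_cons, hLeib 1 _ _ (SPol.X_mem_homog j), map_mul, hs j, hDX j]
      by_cases hji : j = i
      · subst hji
        simp only [Equiv.swap_apply_left, if_pos (Or.inl rfl)]
        have K : y * SPol.X k n j + SPol.X k n i' * y = c * 1 := by
          rw [mul_one, hy, hc, sq, sq, sub_mul, mul_sub]; abel
        have step := key_step y c (SPol.X k n j) (SPol.X k n i')
          (SPol.mon k n l) (s (SPol.mon k n l)) (D (SPol.mon k n l)) 1
          ((-1 : ℤ) ^ l.length) ih K (hcomm i')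
        rw [List.length_cons, pow_succ]
        simp only [pow_one, eq_self_iff_true, true_or, or_true, if_true, mul_smul,
          neg_one_zsmul, smul_neg, sub_eq_add_neg, neg_neg, one_mul, mul_assoc] at step ⊢
        convert step using 2; erw [smul_neg, neg_neg]; rfl
      · by_cases hji' : j = i'
        · subst hji'
          simp only [Equiv.swap_apply_right, if_pos (Or.inr rfl)]
          have K : y * SPol.X k n j + SPol.X k n i * y = c * 1 := by
            rw [mul_one, hy, hc, sq, sq, sub_mul, mul_sub]; abel
          have step := key_step y c (SPol.X k n j) (SPol.X k n i)
            (SPol.mon k n l) (s (SPol.mon k n l)) (D (SPol.mon k n l)) 1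
            ((-1 : ℤ) ^ l.length) ih K (hcomm i)
          rw [List.length_cons, pow_succ]
          simp only [pow_one, eq_self_iff_true, true_or, or_true, if_true, mul_smul,
            neg_one_zsmul, smul_neg, sub_eq_add_neg, neg_neg, one_mul, mul_assoc] at step ⊢
          convert step using 2; erw [smul_neg, neg_neg]; rfl
        · have hsw : Equiv.swap i i' j = j := by
            rw [Equiv.swap_apply_of_ne_of_ne hji hji']
          rw [hsw, if_neg (by tauto)]
          have K : y * SPol.X k n j + SPol.X k n j * y = c * 0 := by
            rw [mul_zero, hy, sub_mul, mul_sub,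
              SPol.X_anti j i' (fun h => hji' h),
              SPol.X_anti j i (fun h => hji h)]
            abel
          have step := key_step y c (SPol.X k n j) (SPol.X k n j)
            (SPol.mon k n l) (s (SPol.mon k n l)) (D (SPol.mon k n l)) 0
            ((-1 : ℤ) ^ l.length) ih K (hcomm j)
          rw [List.length_cons, pow_succ]
          simp only [pow_one, mul_smul, neg_one_zsmul, smul_neg, sub_eq_add_neg,
            neg_neg, zero_mul, zero_add, mul_assoc] at step ⊢
          convert step using 2; erw [smul_neg, neg_neg]; rfl
  refine Submodule.span_induction
    (p := fun f _ => y * f - ((-1 : ℤ) ^ m) • (s f * y) = c * D f)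
    ?_ ?_ ?_ ?_ hf
  · rintro f ⟨l, hl, rfl⟩
    rw [← hl]
    exact hmon l
  · simp
  · intro a b _ _ ha hb
    erw [map_add, map_add, mul_add, add_mul, smul_add, mul_add, ← ha, ← hb]
    abel
  · intro r a _ h
    rw [map_smul, map_smul, mul_smul_comm, smul_mul_assoc,
      smul_comm ((-1 : ℤ) ^ m) r, ← smul_sub, h, mul_smul_comm]
end
end
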